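/- Let π_1,…,π_5 be permutations and for a permutation x let I_i^x be the set of elements unaligned between x and π_i under a fixed optimal alignment, so that ‖I_i^x‖_w = d^w_U(x,π_i). Then ‖I_i^x ∩ I_j^x‖_w ≤ d^w_U(x,π_i) + d^w_U(x,π_j) − d^w_U(π_i,π_j), and consequently ‖B_x‖_w ≤ Δ(x,{π_1,…,π_5}) where B_x = ∪_{i<j}(I_i^x ∩ I_j^x) and Δ is the total slack under d^w_U. -/

import Mathlib

/-- `S` indexes a common subsequence of permutations `x` and `y`. -/
def IsCommon {n : ℕ} (x y : Equiv.Perm (Fin n)) (S : Finset (Fin n)) : Prop :=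
  ∀ a ∈ S, ∀ b ∈ S, (x.symm a < x.symm b ↔ y.symm a < y.symm b)

/-- Element-weighted Ulam distance. -/
noncomputable def ulamW {n : ℕ} (w : Fin n → ℝ) (x y : Equiv.Perm (Fin n)) : ℝ :=
  sInf {c : ℝ | ∃ S : Finset (Fin n), IsCommon x y S ∧ c = ∑ e ∈ Finset.univ \ S, w e}

lemma sum_biUnion_le_sum {ι α : Type*} [DecidableEq ι] [DecidableEq α] (s : Finset ι) (t : ι → Finset α)
    (f : α → ℝ) (hf : ∀ a, 0 ≤ f a) :
    ∑ a ∈ s.biUnion t, f a ≤ ∑ i ∈ s, ∑ a ∈ t i, f a := by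
  induction s using Finset.induction with
  | empty => simp
  | insert i s' h ih =>
    rw [Finset.biUnion_insert, Finset.sum_insert h]
    have hu : ∑ a ∈ t i ∪ s'.biUnion t, f a ≤ ∑ a ∈ t i, f a + ∑ a ∈ s'.biUnion t, f a := by
      have := Finset.sum_union_inter (s₁ := t i) (s₂ := s'.biUnion t) (f := f)
      have hnn : 0 ≤ ∑ a ∈ t i ∩ s'.biUnion t, f a := Finset.sum_nonneg fun a _ => hf a
      linarith
    linarith

lemma ulamW_le {n : ℕ} (w : Fin n → ℝ) (hw : ∀ e, 0 ≤ w e) (x y : Equiv.Perm (Fin n))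
    (S : Finset (Fin n)) (hS : IsCommon x y S) :
    ulamW w x y ≤ ∑ e ∈ Finset.univ \ S, w e := by
  apply csInf_le
  · refine ⟨0, ?_⟩
    rintro c ⟨T, _, rfl⟩
    exact Finset.sum_nonneg fun e _ => hw e
  · exact ⟨S, hS, rfl⟩

open Classical in
/-- With `I_i = univ \ A i` the unaligned elements between `x` and `π i`,
`‖I_i ∩ I_j‖ ≤ d(x,π_i)+d(x,π_j)−d(π_i,π_j)`, and consequently
`‖B_x‖ ≤ Δ(x,{π_1,…,π_5})` under the weighted Ulam distance. -/
theorem ulam_bad_le_slack {n : ℕ} (w : Fin n → ℝ) (hw : ∀ e, 0 ≤ w e)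
    (π : Fin 5 → Equiv.Perm (Fin n)) (x : Equiv.Perm (Fin n))
    (A : Fin 5 → Finset (Fin n))
    (hA : ∀ i, IsCommon x (π i) (A i))
    (hAopt : ∀ i, ∑ e ∈ Finset.univ \ A i, w e = ulamW w x (π i)) :
    (∀ i j : Fin 5, i ≠ j →
      ∑ e ∈ (Finset.univ \ A i) ∩ (Finset.univ \ A j), w e
        ≤ ulamW w x (π i) + ulamW w x (π j) - ulamW w (π i) (π j)) ∧
    (∑ e ∈ Finset.univ.filter
        (fun e => ∃ i j : Fin 5, i < j ∧ e ∉ A i ∧ e ∉ A j), w e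
      ≤ ∑ i : Fin 5, ∑ j : Fin 5,
          if i < j then ulamW w x (π i) + ulamW w x (π j) - ulamW w (π i) (π j)
          else 0) := by
  have key : ∀ i j : Fin 5,
      ∑ e ∈ (Finset.univ \ A i) ∩ (Finset.univ \ A j), w e
        ≤ ulamW w x (π i) + ulamW w x (π j) - ulamW w (π i) (π j) := by
    intro i j
    have hcomm : IsCommon (π i) (π j) (A i ∩ A j) := by
      intro a ha b hb
      rw [Finset.mem_inter] at ha hb
      rw [← hA i a ha.1 b hb.1, hA j a ha.2 b hb.2]
    have hle := ulamW_le w hw (π i) (π j) (A i ∩ A j) hcomm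
    have hunion : (Finset.univ \ A i) ∪ (Finset.univ \ A j)
        = Finset.univ \ (A i ∩ A j) := by
      ext e; simp [Finset.mem_union, Finset.mem_sdiff, or_iff_not_imp_left,
        Classical.not_not, and_comm]
    have hsum := Finset.sum_union_inter (s₁ := Finset.univ \ A i)
      (s₂ := Finset.univ \ A j) (f := w)
    rw [hunion] at hsum
    have h1 := hAopt i
    have h2 := hAopt j
    linarith
  refine ⟨fun i j _ => key i j, ?_⟩
  set P : Finset (Fin 5 × Fin 5) := Finset.univ.filter (fun p => p.1 < p.2) with hP
  have hsub : Finset.univ.filter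
      (fun e => ∃ i j : Fin 5, i < j ∧ e ∉ A i ∧ e ∉ A j)
      ⊆ P.biUnion (fun p => (Finset.univ \ A p.1) ∩ (Finset.univ \ A p.2)) := by
    intro e he
    rw [Finset.mem_filter] at he
    obtain ⟨_, i, j, hij, hi, hj⟩ := he
    rw [Finset.mem_biUnion]
    exact ⟨(i, j), by simp [hP, hij], by simp [hi, hj]⟩
  calc ∑ e ∈ Finset.univ.filter
        (fun e => ∃ i j : Fin 5, i < j ∧ e ∉ A i ∧ e ∉ A j), w e
      ≤ ∑ e ∈ P.biUnion (fun p => (Finset.univ \ A p.1) ∩ (Finset.univ \ A p.2)), w e :=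
        Finset.sum_le_sum_of_subset_of_nonneg hsub (fun e _ _ => hw e)
    _ ≤ ∑ p ∈ P, ∑ e ∈ (Finset.univ \ A p.1) ∩ (Finset.univ \ A p.2), w e :=
        sum_biUnion_le_sum P _ w hw
    _ ≤ ∑ p ∈ P, (ulamW w x (π p.1) + ulamW w x (π p.2) - ulamW w (π p.1) (π p.2)) :=
        Finset.sum_le_sum (fun p _ => key p.1 p.2)
    _ = ∑ i : Fin 5, ∑ j : Fin 5,
          if i < j then ulamW w x (π i) + ulamW w x (π j) - ulamW w (π i) (π j)
          else 0 := by
        rw [hP, Finset.sum_filter, ← Finset.sum_product', Finset.univ_product_univ]
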